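/- Let ξ : ℝ³ → ℝ be three times continuously differentiable, and let c > 0 and M ≥ 0 be constants such that D²ξ(x)[ζ,ζ] ≥ c|ζ|² for all x, ζ ∈ ℝ³ and |D³ξ(x)[ζ,ζ,ζ]| ≤ M|ζ|³ for all x with ξ(x) ≤ 0 and all ζ ∈ ℝ³. Then for every x ∈ ℝ³ with ξ(x) ≤ 0 and every v ∈ ℝ³, the derivative at s = 0 of the function s ↦ α(x + s v, v) is bounded in absolute value by (M/c)|v| · α(x,v). -/

import Mathlib

noncomputable section

open Real

/-- Euclidean 3-space. -/
abbrev E3 : Type := EuclideanSpace ℝ (Fin 3)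

/-- Kinetic distance toward the grazing set:
`α(x,v) = (∇ξ(x)·v)² − 2 (D²ξ(x)[v,v]) ξ(x)`. -/
def kineticAlpha (ξ : E3 → ℝ) (x v : E3) : ℝ :=
  (fderiv ℝ ξ x v) ^ 2 - 2 * (iteratedFDeriv ℝ 2 ξ x ![v, v]) * ξ x

/-- The differential inequality `|v·∇ₓα| ≤ (M/c)|v| α` underlying the Velocity Lemma. -/
theorem kineticAlpha_transport_deriv_bound
    (ξ : E3 → ℝ) (hξ : ContDiff ℝ 3 ξ)
    (c M : ℝ) (hc : 0 < c) (hM : 0 ≤ M)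
    (hconv : ∀ x ζ : E3, c * ‖ζ‖ ^ 2 ≤ iteratedFDeriv ℝ 2 ξ x ![ζ, ζ])
    (hthird : ∀ x ζ : E3, ξ x ≤ 0 → |iteratedFDeriv ℝ 3 ξ x ![ζ, ζ, ζ]| ≤ M * ‖ζ‖ ^ 3)
    (x v : E3) (hx : ξ x ≤ 0) :
    |deriv (fun s : ℝ => kineticAlpha ξ (x + s • v) v) 0|
      ≤ M / c * ‖v‖ * kineticAlpha ξ x v := by
  -- notation
  set a0 : ℝ := fderiv ℝ ξ x v with ha0
  set a2 : ℝ := iteratedFDeriv ℝ 2 ξ x ![v, v] with ha2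
  set a3 : ℝ := iteratedFDeriv ℝ 3 ξ x ![v, v, v] with ha3
  -- the line
  have hline : HasDerivAt (fun s : ℝ => x + s • v) v 0 := by
    simpa using ((hasDerivAt_id (0 : ℝ)).smul_const v).const_add x
  have hx0 : x + (0 : ℝ) • v = x := by simp
  -- differentiability
  have hξd : DifferentiableAt ℝ ξ x := (hξ.differentiable (by norm_num)).differentiableAt
  have hfd : ContDiff ℝ 2 (fderiv ℝ ξ) := hξ.fderiv_right (by norm_num)
  have hfd1 : DifferentiableAt ℝ (fderiv ℝ ξ) x :=
    (hfd.differentiable (by norm_num)).differentiableAt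
  have hit2 : ContDiff ℝ 1 (iteratedFDeriv ℝ 2 ξ) := hξ.iteratedFDeriv_right (by norm_num)
  have hit2d : DifferentiableAt ℝ (iteratedFDeriv ℝ 2 ξ) x :=
    (hit2.differentiable (by norm_num)).differentiableAt
  -- derivative of s ↦ ξ (x + s v)
  have h1 : HasDerivAt (fun s : ℝ => ξ (x + s • v)) a0 0 := by
    have h := hξd.hasFDerivAt
    rw [← hx0] at h
    have h' := h.comp_hasDerivAt 0 hline
    rw [hx0] at h'
    exact h'
  -- derivative of s ↦ Dξ(x+sv)[v]
  have h2 : HasDerivAt (fun s : ℝ => fderiv ℝ ξ (x + s • v) v) a2 0 := by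
    have hev : HasFDerivAt (fun y : E3 => fderiv ℝ ξ y v)
        ((ContinuousLinearMap.apply ℝ ℝ v).comp (fderiv ℝ (fderiv ℝ ξ) x)) x :=
      (ContinuousLinearMap.apply ℝ ℝ v).hasFDerivAt.comp x hfd1.hasFDerivAt
    rw [← hx0] at hev
    have := hev.comp_hasDerivAt 0 hline
    have hval : a2 = fderiv ℝ (fderiv ℝ ξ) x v v := by
      rw [ha2, iteratedFDeriv_two_apply]; simp
    simp [hx0] at this
    rw [hval]
    exact this
  -- derivative of s ↦ D²ξ(x+sv)[v,v]
  have h3 : HasDerivAt (fun s : ℝ => iteratedFDeriv ℝ 2 ξ (x + s • v) ![v, v]) a3 0 := by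
    have hev : HasFDerivAt (fun y : E3 => iteratedFDeriv ℝ 2 ξ y ![v, v])
        ((ContinuousMultilinearMap.apply ℝ (fun _ : Fin 2 => E3) ℝ ![v, v]).comp
          (fderiv ℝ (iteratedFDeriv ℝ 2 ξ) x)) x :=
      (ContinuousMultilinearMap.apply ℝ (fun _ : Fin 2 => E3) ℝ ![v, v]).hasFDerivAt.comp x
        hit2d.hasFDerivAt
    rw [← hx0] at hev
    have := hev.comp_hasDerivAt 0 hline
    have hval : a3 = fderiv ℝ (iteratedFDeriv ℝ 2 ξ) x v ![v, v] := by
      rw [ha3, iteratedFDeriv_succ_apply_left, Matrix.cons_val_zero]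
      congr 1
    simp [hx0] at this
    rw [hval]
    exact this
  -- total derivative
  have hD : HasDerivAt (fun s : ℝ => kineticAlpha ξ (x + s • v) v)
      (2 * a0 ^ 1 * a2 - 2 * (a3 * ξ x + a2 * a0)) 0 := by
    have hsq := h2.pow 2
    have hmul := h3.mul h1
    have hcomb := hsq.sub (hmul.const_mul (2 : ℝ))
    have : (2 : ℕ) * fderiv ℝ ξ (x + (0:ℝ) • v) v ^ (2 - 1) * a2 -
        2 * (a3 * ξ (x + (0:ℝ) • v) + iteratedFDeriv ℝ 2 ξ (x + (0:ℝ) • v) ![v, v] * a0)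
        = 2 * a0 ^ 1 * a2 - 2 * (a3 * ξ x + a2 * a0) := by
      rw [hx0]; push_cast; ring
    rw [this] at hcomb
    exact hcomb.congr_deriv rfl |>.congr_of_eventuallyEq
      (Filter.Eventually.of_forall fun s => by simp [kineticAlpha, mul_assoc])
  have hderiv : deriv (fun s : ℝ => kineticAlpha ξ (x + s • v) v) 0
      = -2 * a3 * ξ x := by
    rw [hD.deriv]; ring
  -- final bound
  have h3b : |a3| ≤ M * ‖v‖ ^ 3 := hthird x v hx
  have h2b : c * ‖v‖ ^ 2 ≤ a2 := hconv x v
  have habs : |(-2 : ℝ) * a3 * ξ x| ≤ 2 * (M * ‖v‖ ^ 3) * (-ξ x) := by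
    have : |(-2 : ℝ) * a3 * ξ x| = 2 * |a3| * (-ξ x) := by
      rw [abs_mul, abs_mul, abs_of_nonpos hx]
      norm_num
    rw [this]
    have hnx : (0:ℝ) ≤ -ξ x := by linarith
    nlinarith [abs_nonneg a3]
  rw [hderiv]
  refine habs.trans ?_
  show 2 * (M * ‖v‖ ^ 3) * (-ξ x) ≤ M / c * ‖v‖ * kineticAlpha ξ x v
  have hα : kineticAlpha ξ x v = a0 ^ 2 - 2 * a2 * ξ x := rfl
  rw [hα, div_mul_eq_mul_div, div_mul_eq_mul_div, le_div_iff₀ hc]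
  have hnx : (0:ℝ) ≤ -ξ x := by linarith
  have hv : (0:ℝ) ≤ ‖v‖ := norm_nonneg v
  nlinarith [sq_nonneg a0, mul_nonneg (mul_nonneg hM hv) hnx,
    mul_nonneg (mul_nonneg (mul_nonneg hM hv) hnx) (sub_nonneg.2 h2b),
    mul_nonneg (mul_nonneg hM hv) (sq_nonneg a0)]
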